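/- Let k be an infinite field and q ∈ k^×. The H-prime ideals of O_q(M_{m,n}(k)) that contain I_1 are precisely the ideals P(I,J) = I_1 + ⟨X_{ij} : i ∈ I⟩ + ⟨X_{ij} : j ∈ J⟩, where I ranges over subsets of {1, …, m} and J over subsets of {1, …, n}. -/

import Mathlib

open scoped TensorProduct

noncomputable section

/-- Defining relations of the coordinate ring `O_q(k^n)` of quantum affine `n`-space:
`y_i y_j = q y_j y_i` for `i < j`. -/
inductive AffRel (k : Type) [Field k] (q : k) (n : ℕ) :
    FreeAlgebra k (Fin n) → FreeAlgebra k (Fin n) → Prop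
  | rel : ∀ {i j : Fin n}, i < j →
      AffRel k q n (FreeAlgebra.ι k i * FreeAlgebra.ι k j)
        (q • (FreeAlgebra.ι k j * FreeAlgebra.ι k i))

/-- The coordinate ring `O_q(k^n)` of quantum affine `n`-space. -/
abbrev QAff (k : Type) [Field k] (q : k) (n : ℕ) : Type := RingQuot (AffRel k q n)

/-- The canonical generators `y_1, …, y_n` of `O_q(k^n)`. -/
def affGen (k : Type) [Field k] (q : k) (n : ℕ) (i : Fin n) : QAff k q n :=
  RingQuot.mkAlgHom k (AffRel k q n) (FreeAlgebra.ι k i)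

/-- Defining relations of the coordinate ring `O_q(M_{m,n}(k))` of quantum `m × n` matrices. -/
inductive MatRel (k : Type) [Field k] (q : k) (m n : ℕ) :
    FreeAlgebra k (Fin m × Fin n) → FreeAlgebra k (Fin m × Fin n) → Prop
  | col : ∀ {i l : Fin m} {j : Fin n}, i < l →
      MatRel k q m n (FreeAlgebra.ι k (i, j) * FreeAlgebra.ι k (l, j))
        (q • (FreeAlgebra.ι k (l, j) * FreeAlgebra.ι k (i, j)))
  | row : ∀ {i : Fin m} {j s : Fin n}, j < s →
      MatRel k q m n (FreeAlgebra.ι k (i, j) * FreeAlgebra.ι k (i, s))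
        (q • (FreeAlgebra.ι k (i, s) * FreeAlgebra.ι k (i, j)))
  | comm : ∀ {i l : Fin m} {j s : Fin n}, i < l → j < s →
      MatRel k q m n (FreeAlgebra.ι k (i, s) * FreeAlgebra.ι k (l, j))
        (FreeAlgebra.ι k (l, j) * FreeAlgebra.ι k (i, s))
  | mixed : ∀ {i l : Fin m} {j s : Fin n}, i < l → j < s →
      MatRel k q m n
        (FreeAlgebra.ι k (i, j) * FreeAlgebra.ι k (l, s) -
          FreeAlgebra.ι k (l, s) * FreeAlgebra.ι k (i, j))
        ((q - q⁻¹) • (FreeAlgebra.ι k (i, s) * FreeAlgebra.ι k (l, j)))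

/-- The coordinate ring `O_q(M_{m,n}(k))` of quantum `m × n` matrices. -/
abbrev QMat (k : Type) [Field k] (q : k) (m n : ℕ) : Type := RingQuot (MatRel k q m n)

/-- The canonical generators `X i j` of `O_q(M_{m,n}(k))`. -/
def X (k : Type) [Field k] (q : k) (m n : ℕ) (i : Fin m) (j : Fin n) : QMat k q m n :=
  RingQuot.mkAlgHom k (MatRel k q m n) (FreeAlgebra.ι k (i, j))

/-- The two-sided ideal `I₁` of `O_q(M_{m,n}(k))` generated by the `2 × 2` quantum minors
`X_{ij} X_{ls} - q X_{is} X_{lj}` for `i < l`, `j < s`. -/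
def I₁ (k : Type) [Field k] (q : k) (m n : ℕ) : TwoSidedIdeal (QMat k q m n) :=
  TwoSidedIdeal.span
    { a | ∃ (i l : Fin m) (j s : Fin n), i < l ∧ j < s ∧
        a = X k q m n i j * X k q m n l s - q • (X k q m n i s * X k q m n l j) }

/-- The monomial `X_{i₁j₁} X_{i₂j₂} ⋯ X_{iₗjₗ}` associated to a list of index pairs. -/
def matMono (k : Type) [Field k] (q : k) (m n : ℕ) (L : List (Fin m × Fin n)) :
    QMat k q m n :=
  (L.map fun p => X k q m n p.1 p.2).prod

/-- A list of index pairs is *ordered* if the row indices are non-increasing and the column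
indices are non-decreasing, i.e. `i₁ ≥ i₂ ≥ ⋯ ≥ iₗ` and `j₁ ≤ j₂ ≤ ⋯ ≤ jₗ`. -/
def OrderedIdx {m n : ℕ} (L : List (Fin m × Fin n)) : Prop :=
  L.Chain' fun p p' => p'.1 ≤ p.1 ∧ p.2 ≤ p'.2

/-- The ideal `P(I,J) = I₁ + ⟨X_{ij} : i ∈ I⟩ + ⟨X_{ij} : j ∈ J⟩` of `O_q(M_{m,n}(k))`. -/
def PIJ (k : Type) [Field k] (q : k) (m n : ℕ) (I : Finset (Fin m)) (J : Finset (Fin n)) :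
    TwoSidedIdeal (QMat k q m n) :=
  I₁ k q m n ⊔
    TwoSidedIdeal.span { a | ∃ (i : Fin m) (j : Fin n), i ∈ I ∧ a = X k q m n i j } ⊔
    TwoSidedIdeal.span { a | ∃ (i : Fin m) (j : Fin n), j ∈ J ∧ a = X k q m n i j }

/-- A two-sided ideal `P` of `O_q(M_{m,n}(k))` is `H`-invariant for the torus
`H = (k^×)^m × (k^×)^n` if it is stable under every `k`-algebra automorphism sending each
`X i j` to `α_i β_j X i j`. -/
def IsHInvariant (k : Type) [Field k] (q : k) (m n : ℕ)
    (P : TwoSidedIdeal (QMat k q m n)) : Prop :=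
  ∀ (α : Fin m → kˣ) (β : Fin n → kˣ) (φ : QMat k q m n ≃ₐ[k] QMat k q m n),
    (∀ (i : Fin m) (j : Fin n),
      φ (X k q m n i j) = ((α i : k) * (β j : k)) • X k q m n i j) →
    ∀ a ∈ P, φ a ∈ P

/-- A proper `H`-invariant two-sided ideal `P` is `H`-prime if for all `H`-invariant
two-sided ideals `Q`, `R` with `QR ⊆ P` one has `Q ⊆ P` or `R ⊆ P`. -/
def IsHPrime (k : Type) [Field k] (q : k) (m n : ℕ)
    (P : TwoSidedIdeal (QMat k q m n)) : Prop :=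
  IsHInvariant k q m n P ∧ P ≠ ⊤ ∧
    ∀ Q R : TwoSidedIdeal (QMat k q m n),
      IsHInvariant k q m n Q → IsHInvariant k q m n R →
      (∀ a ∈ Q, ∀ b ∈ R, a * b ∈ P) → Q ≤ P ∨ R ≤ P

/-! ### Auxiliary development -/

section Aux

variable {k : Type} [Field k] {q : k} {m n : ℕ}

open TwoSidedIdeal

local notation "𝕏" => X k q m n

/-- smul membership in a two-sided ideal over an algebra. -/
lemma tsi_smul_mem (P : TwoSidedIdeal (QMat k q m n)) (c : k) {x : QMat k q m n}
    (hx : x ∈ P) : c • x ∈ P := by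
  rw [Algebra.smul_def]
  exact P.mul_mem_left _ _ hx

lemma tsi_span_le {s : Set (QMat k q m n)} {P : TwoSidedIdeal (QMat k q m n)}
    (h : s ⊆ P) : TwoSidedIdeal.span s ≤ P :=
  fun _ hx => TwoSidedIdeal.mem_span_iff.1 hx P h

lemma tsi_eq_top_of_one_mem {P : TwoSidedIdeal (QMat k q m n)} (h : (1 : QMat k q m n) ∈ P) :
    P = ⊤ := by
  rw [eq_top_iff]
  intro x _
  simpa using P.mul_mem_left x 1 h

/-- The four defining relations, as equations in `QMat`. -/
lemma Xcol {i l : Fin m} (j : Fin n) (h : i < l) :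
    𝕏 i j * 𝕏 l j = q • (𝕏 l j * 𝕏 i j) := by
  have := RingQuot.mkAlgHom_rel k (MatRel.col (k := k) (q := q) (j := j) h)
  simpa [X, map_mul, map_smul] using this

lemma Xrow (i : Fin m) {j s : Fin n} (h : j < s) :
    𝕏 i j * 𝕏 i s = q • (𝕏 i s * 𝕏 i j) := by
  have := RingQuot.mkAlgHom_rel k (MatRel.row (k := k) (q := q) (i := i) h)
  simpa [X, map_mul, map_smul] using this

lemma Xcomm {i l : Fin m} {j s : Fin n} (h1 : i < l) (h2 : j < s) :
    𝕏 i s * 𝕏 l j = 𝕏 l j * 𝕏 i s := by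
  have := RingQuot.mkAlgHom_rel k (MatRel.comm (k := k) (q := q) h1 h2)
  simpa [X, map_mul] using this

lemma Xmixed {i l : Fin m} {j s : Fin n} (h1 : i < l) (h2 : j < s) :
    𝕏 i j * 𝕏 l s - 𝕏 l s * 𝕏 i j = (q - q⁻¹) • (𝕏 i s * 𝕏 l j) := by
  have := RingQuot.mkAlgHom_rel k (MatRel.mixed (k := k) (q := q) h1 h2)
  simpa [X, map_mul, map_smul, map_sub] using this

lemma minor_mem_I₁ {i l : Fin m} {j s : Fin n} (h1 : i < l) (h2 : j < s) :
    𝕏 i j * 𝕏 l s - q • (𝕏 i s * 𝕏 l j) ∈ I₁ k q m n :=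
  TwoSidedIdeal.subset_span ⟨i, l, j, s, h1, h2, rfl⟩

end Aux
section Cong

variable {k : Type} [Field k] {q : k} {m n : ℕ}

local notation "𝕏" => X k q m n

/-- Congruence mod `I₁` up to a nonzero scalar. -/
def Cong (k : Type) [Field k] (q : k) (m n : ℕ) (u v : QMat k q m n) : Prop :=
  ∃ c : k, c ≠ 0 ∧ u - c • v ∈ I₁ k q m n

lemma Cong.refl (u : QMat k q m n) : Cong k q m n u u :=
  ⟨1, one_ne_zero, by simp⟩

lemma Cong.symm {u v : QMat k q m n} (h : Cong k q m n u v) : Cong k q m n v u := by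
  obtain ⟨c, hc, hm⟩ := h
  refine ⟨c⁻¹, inv_ne_zero hc, ?_⟩
  have : v - c⁻¹ • u = (-c⁻¹) • (u - c • v) := by
    rw [smul_sub, smul_smul, neg_mul, inv_mul_cancel₀ hc, neg_smul, neg_smul, one_smul]
    abel
  rw [this]
  exact tsi_smul_mem _ _ hm

lemma Cong.trans {u v w : QMat k q m n} (h1 : Cong k q m n u v) (h2 : Cong k q m n v w) :
    Cong k q m n u w := by
  obtain ⟨c, hc, hm⟩ := h1
  obtain ⟨d, hd, hm'⟩ := h2
  refine ⟨c * d, mul_ne_zero hc hd, ?_⟩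
  have : u - (c * d) • w = (u - c • v) + c • (v - d • w) := by
    rw [smul_sub, smul_smul]; abel
  rw [this]
  exact add_mem hm (tsi_smul_mem _ _ hm')

lemma Cong.mul_left {u v : QMat k q m n} (w : QMat k q m n) (h : Cong k q m n u v) :
    Cong k q m n (w * u) (w * v) := by
  obtain ⟨c, hc, hm⟩ := h
  refine ⟨c, hc, ?_⟩
  have : w * u - c • (w * v) = w * (u - c • v) := by
    rw [mul_sub, mul_smul_comm]
  rw [this]
  exact TwoSidedIdeal.mul_mem_left _ _ _ hm

lemma Cong.mul_right {u v : QMat k q m n} (w : QMat k q m n) (h : Cong k q m n u v) :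
    Cong k q m n (u * w) (v * w) := by
  obtain ⟨c, hc, hm⟩ := h
  refine ⟨c, hc, ?_⟩
  have : u * w - c • (v * w) = (u - c • v) * w := by
    rw [sub_mul, smul_mul_assoc]
  rw [this]
  exact TwoSidedIdeal.mul_mem_right _ _ _ hm

lemma Cong.mem_iff {P : TwoSidedIdeal (QMat k q m n)} (hP : I₁ k q m n ≤ P)
    {u v : QMat k q m n} (h : Cong k q m n u v) : (u ∈ P ↔ v ∈ P) := by
  obtain ⟨c, hc, hm⟩ := h
  constructor
  · intro hu
    have : v = c⁻¹ • (u - (u - c • v)) := by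
      rw [sub_sub_cancel, smul_smul]
      field_simp
      rw [one_smul]
    rw [this]
    exact tsi_smul_mem _ _ (sub_mem hu (hP hm))
  · intro hv
    have : u = (u - c • v) + c • v := by abel
    rw [this]
    exact add_mem (hP hm) (tsi_smul_mem _ _ hv)

/-- The fundamental swap lemma: any product of two generators is congruent mod `I₁`,
up to a nonzero scalar, to the "ordered" product pairing the larger row with the
smaller column. -/
lemma swap (hq : q ≠ 0) (i l : Fin m) (j s : Fin n) :
    Cong k q m n (𝕏 i j * 𝕏 l s)
      (𝕏 (max i l) (min j s) * 𝕏 (min i l) (max j s)) := by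
  rcases lt_trichotomy i l with hil | rfl | hli
  · rcases lt_trichotomy j s with hjs | rfl | hsj
    · -- i < l, j < s : minor + comm
      rw [max_eq_right hil.le, min_eq_left hil.le, min_eq_left hjs.le, max_eq_right hjs.le]
      exact ⟨q, hq, by rw [← Xcomm hil hjs]; exact minor_mem_I₁ hil hjs⟩
    · -- i < l, j = s : column relation
      rw [max_eq_right hil.le, min_eq_left hil.le, min_self, max_self]
      exact ⟨q, hq, by rw [← Xcol j hil]; simp⟩
    · -- i < l, s < j : comm
      rw [max_eq_right hil.le, min_eq_left hil.le, min_eq_right hsj.le, max_eq_left hsj.le]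
      exact ⟨1, one_ne_zero, by rw [Xcomm hil hsj]; simp⟩
  · rcases lt_trichotomy j s with hjs | rfl | hsj
    · rw [max_self, min_self, min_eq_left hjs.le, max_eq_right hjs.le]
      exact ⟨1, one_ne_zero, by simp⟩
    · exact ⟨1, one_ne_zero, by simp⟩
    · -- i = i, s < j : row relation
      rw [max_self, min_self, min_eq_right hsj.le, max_eq_left hsj.le]
      refine ⟨q⁻¹, inv_ne_zero hq, ?_⟩
      have h := Xrow (k := k) (q := q) i hsj
      have : 𝕏 i j * 𝕏 i s - q⁻¹ • (𝕏 i s * 𝕏 i j) = 0 := by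
        rw [h, smul_smul, inv_mul_cancel₀ hq, one_smul, sub_self]
      rw [this]; exact zero_mem _
  · rcases lt_trichotomy j s with hjs | rfl | hsj
    · rw [max_eq_left hli.le, min_eq_right hli.le, min_eq_left hjs.le, max_eq_right hjs.le]
      exact ⟨1, one_ne_zero, by simp⟩
    · rw [max_eq_left hli.le, min_eq_right hli.le, min_self, max_self]
      exact ⟨1, one_ne_zero, by simp⟩
    · -- l < i, s < j : the mixed case
      rw [max_eq_left hli.le, min_eq_right hli.le, min_eq_right hsj.le, max_eq_left hsj.le]
      refine ⟨q⁻¹, inv_ne_zero hq, ?_⟩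
      have hmix := Xmixed (k := k) (q := q) hli hsj
      have hcomm := Xcomm (k := k) (q := q) hli hsj
      have hminor := minor_mem_I₁ (k := k) (q := q) hli hsj
      have e1 : 𝕏 i j * 𝕏 l s = 𝕏 l s * 𝕏 i j - (q - q⁻¹) • (𝕏 l j * 𝕏 i s) := by
        rw [← hmix]; abel
      have e2 : 𝕏 i j * 𝕏 l s - q⁻¹ • (𝕏 i s * 𝕏 l j)
          = 𝕏 l s * 𝕏 i j - q • (𝕏 l j * 𝕏 i s) := by
        rw [← hcomm, e1]; module
      rw [e2]
      exact hminor

end Cong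
section Weights

variable {k : Type} [Field k] {q : k} {m n : ℕ}

local notation "𝕏" => X k q m n

/-- The weight (pair of row/column multisets) of a list of index pairs. -/
def wt {m n : ℕ} (L : List (Fin m × Fin n)) : Multiset (Fin m) × Multiset (Fin n) :=
  (↑(L.map Prod.fst), ↑(L.map Prod.snd))

lemma wt_nil : wt ([] : List (Fin m × Fin n)) = 0 := rfl

lemma wt_cons (p : Fin m × Fin n) (L : List (Fin m × Fin n)) :
    wt (p :: L) = (p.1 ::ₘ (wt L).1, p.2 ::ₘ (wt L).2) := rfl

lemma wt_append (L L' : List (Fin m × Fin n)) : wt (L ++ L') = wt L + wt L' := by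
  simp [wt, Prod.ext_iff]

lemma wt_card (L : List (Fin m × Fin n)) :
    Multiset.card (wt L).1 = Multiset.card (wt L).2 := by
  simp [wt]

lemma matMono_nil : matMono k q m n [] = 1 := rfl

lemma matMono_cons (p : Fin m × Fin n) (L : List (Fin m × Fin n)) :
    matMono k q m n (p :: L) = 𝕏 p.1 p.2 * matMono k q m n L := by
  simp [matMono]

lemma matMono_append (L L' : List (Fin m × Fin n)) :
    matMono k q m n (L ++ L') = matMono k q m n L * matMono k q m n L' := by
  simp [matMono]

lemma matMono_singleton (p : Fin m × Fin n) : matMono k q m n [p] = 𝕏 p.1 p.2 := by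
  simp [matMono]

/-- Fronting lemma: every nonempty monomial is congruent mod `I₁` to one whose first factor
has the largest row index and the smallest column index. -/
lemma front (hq : q ≠ 0) (p : Fin m × Fin n) (L : List (Fin m × Fin n)) :
    ∃ (p₀ : Fin m × Fin n) (L' : List (Fin m × Fin n)),
      Cong k q m n (matMono k q m n (p :: L)) (matMono k q m n (p₀ :: L')) ∧
      wt (p₀ :: L') = wt (p :: L) ∧
      ∀ p' ∈ p :: L, p'.1 ≤ p₀.1 ∧ p₀.2 ≤ p'.2 := by
  induction L generalizing p with
  | nil =>
    exact ⟨p, [], Cong.refl _, rfl, by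
      rintro p' hp'
      simp only [List.mem_singleton] at hp'
      subst hp'; exact ⟨le_refl _, le_refl _⟩⟩
  | cons p' L ih =>
    obtain ⟨p₁, L₁, hc, hw, hb⟩ := ih p'
    -- matMono (p :: p' :: L) ≅ X p * matMono (p₁ :: L₁)
    have hc1 : Cong k q m n (matMono k q m n (p :: p' :: L))
        (matMono k q m n (p :: p₁ :: L₁)) := by
      rw [matMono_cons, matMono_cons p]
      exact Cong.mul_left _ hc
    -- swap the first two factors
    have hsw := swap (k := k) (m := m) (n := n) hq p.1 p₁.1 p.2 p₁.2
    have hc2 : Cong k q m n (matMono k q m n (p :: p₁ :: L₁))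
        (matMono k q m n ((max p.1 p₁.1, min p.2 p₁.2) :: (min p.1 p₁.1, max p.2 p₁.2) :: L₁)) := by
      rw [matMono_cons, matMono_cons p₁, ← mul_assoc,
        matMono_cons, matMono_cons ((min p.1 p₁.1, max p.2 p₁.2)), ← mul_assoc]
      exact Cong.mul_right _ hsw
    refine ⟨(max p.1 p₁.1, min p.2 p₁.2), (min p.1 p₁.1, max p.2 p₁.2) :: L₁,
      (hc1.trans hc2), ?_, ?_⟩
    · -- weights agree
      have key : ∀ {α : Type} [inst : LinearOrder α] (a b : α) (s : Multiset α),
          max a b ::ₘ min a b ::ₘ s = a ::ₘ b ::ₘ s := by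
        intro α _ a b s
        rcases le_total a b with h | h
        · rw [max_eq_right h, min_eq_left h, Multiset.cons_swap]
        · rw [max_eq_left h, min_eq_right h]
      have h1 := congrArg Prod.fst hw
      have h2 := congrArg Prod.snd hw
      rw [wt_cons, wt_cons] at h1 h2
      simp only at h1 h2
      refine Prod.ext ?_ ?_
      · simp only [wt_cons]
        rw [key]
        exact congrArg (p.1 ::ₘ ·) h1
      · simp only [wt_cons]
        rw [Multiset.cons_swap, key]
        exact congrArg (p.2 ::ₘ ·) h2
    · rintro p'' hp''
      rcases List.mem_cons.1 hp'' with rfl | hmem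
      · exact ⟨le_max_left _ _, min_le_left _ _⟩
      · obtain ⟨h1, h2⟩ := hb p'' hmem
        exact ⟨h1.trans (le_max_right _ _), (min_le_right _ _).trans h2⟩

end Weights
section Transfer

variable {k : Type} [Field k] {q : k} {m n : ℕ}

local notation "𝕏" => X k q m n

lemma eq_nil_of_wt_eq_zero {L : List (Fin m × Fin n)} (h : (wt L).1 = 0) : L = [] := by
  cases L with
  | nil => rfl
  | cons a t => simp [wt] at h

lemma wt_length (L : List (Fin m × Fin n)) : Multiset.card (wt L).1 = L.length := by
  simp [wt]

lemma mem_of_wt_eq {A B : List (Fin m × Fin n)} (h : wt A = wt B) :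
    ∀ x ∈ A, (∃ y ∈ B, y.1 = x.1) ∧ (∃ y ∈ B, y.2 = x.2) := by
  intro x hx
  constructor
  · have : x.1 ∈ (wt B).1 := by
      rw [← h]
      exact Multiset.mem_coe.2 (List.mem_map_of_mem (f := Prod.fst) hx)
    simpa [wt, Multiset.mem_coe, List.mem_map] using this
  · have : x.2 ∈ (wt B).2 := by
      rw [← h]
      exact Multiset.mem_coe.2 (List.mem_map_of_mem (f := Prod.snd) hx)
    simpa [wt, Multiset.mem_coe, List.mem_map] using this

/-- Straightening: two monomials with the same weight are congruent mod `I₁`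
up to a nonzero scalar. -/
lemma transfer_aux (hq : q ≠ 0) :
    ∀ (N : ℕ) (L L' : List (Fin m × Fin n)), L.length ≤ N → wt L = wt L' →
      Cong k q m n (matMono k q m n L) (matMono k q m n L') := by
  intro N
  induction N with
  | zero =>
    intro L L' hlen hw
    have hL : L = [] := List.length_eq_zero_iff.1 (Nat.le_zero.1 hlen)
    subst hL
    have hL' : L' = [] := eq_nil_of_wt_eq_zero (by rw [← hw]; rfl)
    subst hL'
    exact Cong.refl _
  | succ N ih =>
    intro L L' hlen hw
    cases L with
    | nil =>
      have hL' : L' = [] := eq_nil_of_wt_eq_zero (by rw [← hw]; rfl)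
      subst hL'
      exact Cong.refl _
    | cons p L₀ =>
      cases L' with
      | nil =>
        exfalso
        have := congrArg Prod.fst hw
        simp [wt] at this
      | cons p' L₀' =>
        obtain ⟨a, M, hca, hwa, hba⟩ := front hq p L₀
        obtain ⟨a', M', hca', hwa', hba'⟩ := front hq p' L₀'
        have hww : wt (a :: M) = wt (a' :: M') := by rw [hwa, hw, ← hwa']
        -- bounds transported to the fronted lists
        have hbb : ∀ y ∈ a :: M, y.1 ≤ a.1 ∧ a.2 ≤ y.2 := by
          intro y hy
          obtain ⟨⟨z, hz, hz1⟩, ⟨z', hz', hz2⟩⟩ := mem_of_wt_eq hwa y hy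
          exact ⟨hz1 ▸ (hba z hz).1, hz2 ▸ (hba z' hz').2⟩
        have hbb' : ∀ y ∈ a' :: M', y.1 ≤ a'.1 ∧ a'.2 ≤ y.2 := by
          intro y hy
          obtain ⟨⟨z, hz, hz1⟩, ⟨z', hz', hz2⟩⟩ := mem_of_wt_eq hwa' y hy
          exact ⟨hz1 ▸ (hba' z hz).1, hz2 ▸ (hba' z' hz').2⟩
        have haa : a = a' := by
          obtain ⟨⟨y, hy, hy1⟩, ⟨y2, hy2, hy22⟩⟩ :=
            mem_of_wt_eq hww a (List.mem_cons_self (a := a) (l := M))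
          obtain ⟨⟨z, hz, hz1⟩, ⟨z2, hz2, hz22⟩⟩ :=
            mem_of_wt_eq hww.symm a' (List.mem_cons_self (a := a') (l := M'))
          refine Prod.ext (le_antisymm ?_ ?_) (le_antisymm ?_ ?_)
          · rw [← hy1]; exact (hbb' y hy).1
          · rw [← hz1]; exact (hbb z hz).1
          · rw [← hz22]; exact (hbb z2 hz2).2
          · rw [← hy22]; exact (hbb' y2 hy2).2
        subst haa
        have hMM : wt M = wt M' := by
          have h1 := congrArg Prod.fst hww
          have h2 := congrArg Prod.snd hww
          rw [wt_cons, wt_cons] at h1 h2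
          simp only at h1 h2
          exact Prod.ext (by simpa using h1) (by simpa using h2)
        have hlenM : M.length ≤ N := by
          have e1 : M.length + 1 = L₀.length + 1 := by
            have := congrArg (fun s => Multiset.card s.1) hwa
            simpa [wt] using this
          have : L₀.length ≤ N := by
            simpa using Nat.succ_le_succ_iff.1 hlen
          omega
        have hmid : Cong k q m n (matMono k q m n (a :: M)) (matMono k q m n (a :: M')) := by
          rw [matMono_cons, matMono_cons]
          exact Cong.mul_left _ (ih M M' hlenM hMM)
        exact (hca.trans hmid).trans hca'.symm

lemma transfer (hq : q ≠ 0) {L L' : List (Fin m × Fin n)} (hw : wt L = wt L') :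
    Cong k q m n (matMono k q m n L) (matMono k q m n L') :=
  transfer_aux hq L.length L L' le_rfl hw

end Transfer
section Torus

variable {k : Type} [Field k] {q : k} {m n : ℕ}

local notation "𝕏" => X k q m n

lemma smul_mul_smul' (a b : k) (x y : QMat k q m n) :
    (a • x) * (b • y) = (a * b) • (x * y) := by
  rw [smul_mul_assoc, mul_smul_comm, smul_smul]

lemma qmat_algHom_ext {A : Type} [Semiring A] [Algebra k A]
    (f g : QMat k q m n →ₐ[k] A) (h : ∀ i j, f (𝕏 i j) = g (𝕏 i j)) : f = g := by
  apply RingQuot.ringQuot_ext'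
  apply FreeAlgebra.hom_ext
  funext p
  exact h p.1 p.2

/-- The torus action as an algebra endomorphism. -/
def torusHom (α : Fin m → kˣ) (β : Fin n → kˣ) : QMat k q m n →ₐ[k] QMat k q m n :=
  RingQuot.liftAlgHom k ⟨FreeAlgebra.lift k fun p => ((α p.1 : k) * (β p.2 : k)) • 𝕏 p.1 p.2, by
    intro x y hxy
    induction hxy with
    | @col i l j h =>
      simp only [map_mul, map_smul, FreeAlgebra.lift_ι_apply, smul_mul_smul']
      rw [Xcol j h, smul_smul, smul_smul]
      congr 1
      ring
    | @row i j s h =>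
      simp only [map_mul, map_smul, FreeAlgebra.lift_ι_apply, smul_mul_smul']
      rw [Xrow i h, smul_smul, smul_smul]
      congr 1
      ring
    | @comm i l j s h1 h2 =>
      simp only [map_mul, FreeAlgebra.lift_ι_apply, smul_mul_smul']
      rw [Xcomm h1 h2]
      congr 1
      ring
    | @mixed i l j s h1 h2 =>
      simp only [map_mul, map_smul, map_sub, FreeAlgebra.lift_ι_apply, smul_mul_smul']
      rw [show ((α i : k) * β j * ((α l : k) * β s)) • (𝕏 i j * 𝕏 l s)
          - ((α l : k) * β s * ((α i : k) * β j)) • (𝕏 l s * 𝕏 i j)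
          = ((α i : k) * β j * ((α l : k) * β s)) • (𝕏 i j * 𝕏 l s - 𝕏 l s * 𝕏 i j) by
        rw [smul_sub]; congr 2; ring]
      rw [Xmixed h1 h2, smul_smul, smul_smul]
      congr 1
      ring⟩

lemma torusHom_X (α : Fin m → kˣ) (β : Fin n → kˣ) (i : Fin m) (j : Fin n) :
    torusHom (q := q) α β (𝕏 i j) = ((α i : k) * (β j : k)) • 𝕏 i j := by
  rw [torusHom, X, RingQuot.liftAlgHom_mkAlgHom_apply, FreeAlgebra.lift_ι_apply]
  rfl

/-- The torus action as an algebra automorphism. -/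
def torusAut (α : Fin m → kˣ) (β : Fin n → kˣ) : QMat k q m n ≃ₐ[k] QMat k q m n :=
  AlgEquiv.ofAlgHom (torusHom α β) (torusHom α⁻¹ β⁻¹)
    (by
      apply qmat_algHom_ext
      intro i j
      rw [AlgHom.comp_apply, torusHom_X, map_smul, torusHom_X, smul_smul, AlgHom.id_apply,
        Pi.inv_apply, Pi.inv_apply, Units.val_inv_eq_inv_val, Units.val_inv_eq_inv_val,
        mul_mul_mul_comm, inv_mul_cancel₀ (Units.ne_zero (α i)),
        inv_mul_cancel₀ (Units.ne_zero (β j)), one_mul, one_smul])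
    (by
      apply qmat_algHom_ext
      intro i j
      rw [AlgHom.comp_apply, torusHom_X, map_smul, torusHom_X, smul_smul, AlgHom.id_apply,
        Pi.inv_apply, Pi.inv_apply, Units.val_inv_eq_inv_val, Units.val_inv_eq_inv_val,
        mul_mul_mul_comm, mul_inv_cancel₀ (Units.ne_zero (α i)),
        mul_inv_cancel₀ (Units.ne_zero (β j)), one_mul, one_smul])

lemma torusAut_X (α : Fin m → kˣ) (β : Fin n → kˣ) (i : Fin m) (j : Fin n) :
    torusAut (q := q) α β (𝕏 i j) = ((α i : k) * (β j : k)) • 𝕏 i j :=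
  torusHom_X α β i j

end Torus
section Pure

variable {k : Type} [Field k] {q : k} {m n : ℕ}

local notation "𝕏" => X k q m n

/-- The span of all monomials of a given weight. -/
def pureSpan (k : Type) [Field k] (q : k) (m n : ℕ)
    (w : Multiset (Fin m) × Multiset (Fin n)) : Submodule k (QMat k q m n) :=
  Submodule.span k {x | ∃ L, wt L = w ∧ x = matMono k q m n L}

lemma matMono_mem_pureSpan (L : List (Fin m × Fin n)) :
    matMono k q m n L ∈ pureSpan k q m n (wt L) :=
  Submodule.subset_span ⟨L, rfl, rfl⟩

/-- Monomials span `QMat`. -/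
lemma monomials_span_top :
    Submodule.span k (Set.range (matMono k q m n)) = ⊤ := by
  rw [eq_top_iff]
  rintro u -
  obtain ⟨a, rfl⟩ := RingQuot.mkAlgHom_surjective k (MatRel k q m n) u
  induction a using FreeAlgebra.induction with
  | grade0 r =>
    have : (RingQuot.mkAlgHom k (MatRel k q m n)) (algebraMap k _ r)
        = r • matMono k q m n [] := by
      rw [AlgHom.commutes, Algebra.algebraMap_eq_smul_one, matMono_nil]
    rw [this]
    exact Submodule.smul_mem _ _ (Submodule.subset_span ⟨[], rfl⟩)
  | grade1 p =>
    have : (RingQuot.mkAlgHom k (MatRel k q m n)) (FreeAlgebra.ι k p)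
        = matMono k q m n [p] := by
      rw [matMono_singleton]
      rfl
    rw [this]
    exact Submodule.subset_span ⟨[p], rfl⟩
  | mul a b ha hb =>
    rw [map_mul]
    have h2 : Submodule.span k (Set.range (matMono k q m n)) *
        Submodule.span k (Set.range (matMono k q m n)) ≤
        Submodule.span k (Set.range (matMono k q m n)) := by
      rw [Submodule.span_mul_span]
      apply Submodule.span_le.2
      rintro x ⟨y, ⟨L, rfl⟩, z, ⟨L', rfl⟩, rfl⟩
      exact Submodule.subset_span ⟨L ++ L',
        by rw [matMono_append (k := k) (q := q) L L']⟩
    exact h2 (Submodule.mul_mem_mul ha hb)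
  | add a b ha hb =>
    rw [map_add]
    exact add_mem ha hb

/-- Decomposition of an arbitrary element into weight-pure components. -/
lemma decomp (u : QMat k q m n) :
    ∃ f : (Multiset (Fin m) × Multiset (Fin n)) →₀ QMat k q m n,
      (∀ w, f w ∈ pureSpan k q m n w) ∧ f.sum (fun _ x => x) = u := by
  have h1 : Set.range (matMono k q m n) = ⋃ w, {x | ∃ L, wt L = w ∧ x = matMono k q m n L} := by
    ext x
    simp only [Set.mem_range, Set.mem_iUnion, Set.mem_setOf_eq]
    constructor
    · rintro ⟨L, rfl⟩; exact ⟨wt L, L, rfl, rfl⟩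
    · rintro ⟨w, L, _, rfl⟩; exact ⟨L, rfl⟩
  have h2 : u ∈ ⨆ w, pureSpan k q m n w := by
    have : u ∈ Submodule.span k (Set.range (matMono k q m n)) := by
      rw [monomials_span_top]; trivial
    rw [h1, Submodule.span_iUnion] at this
    exact this
  rw [Submodule.mem_iSup_iff_exists_finsupp] at h2
  obtain ⟨f, hf, hsum⟩ := h2
  exact ⟨f, hf, hsum⟩

/-- The character of the torus on the weight space of weight `w`. -/
def chr (α : Fin m → kˣ) (β : Fin n → kˣ) (w : Multiset (Fin m) × Multiset (Fin n)) : k :=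
  (w.1.map fun i => (α i : k)).prod * (w.2.map fun j => (β j : k)).prod

lemma phi_matMono (α : Fin m → kˣ) (β : Fin n → kˣ) (φ : QMat k q m n ≃ₐ[k] QMat k q m n)
    (hφ : ∀ i j, φ (𝕏 i j) = ((α i : k) * (β j : k)) • 𝕏 i j) (L : List (Fin m × Fin n)) :
    φ (matMono k q m n L) = chr α β (wt L) • matMono k q m n L := by
  induction L with
  | nil =>
    simp [matMono_nil, chr, wt_nil]
  | cons p L ih =>
    rw [matMono_cons, map_mul, hφ p.1 p.2, ih, smul_mul_smul', ← matMono_cons]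
    congr 1
    rw [chr, wt_cons]
    simp only [Multiset.map_cons, Multiset.prod_cons, chr]
    ring

lemma phi_pure (α : Fin m → kˣ) (β : Fin n → kˣ) (φ : QMat k q m n ≃ₐ[k] QMat k q m n)
    (hφ : ∀ i j, φ (𝕏 i j) = ((α i : k) * (β j : k)) • 𝕏 i j)
    {w : Multiset (Fin m) × Multiset (Fin n)} {u : QMat k q m n}
    (hu : u ∈ pureSpan k q m n w) : φ u = chr α β w • u := by
  induction hu using Submodule.span_induction with
  | mem x hx =>
    obtain ⟨L, rfl, rfl⟩ := hx
    exact phi_matMono α β φ hφ L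
  | zero => simp
  | add x y _ _ hx hy => rw [map_add, hx, hy, smul_add]
  | smul c x _ hx => rw [map_smul, hx, smul_comm]

lemma pure_smul {w : Multiset (Fin m) × Multiset (Fin n)} {u : QMat k q m n} (c : k)
    (hu : u ∈ pureSpan k q m n w) : c • u ∈ pureSpan k q m n w :=
  Submodule.smul_mem _ _ hu

end Pure
section Separation

variable {k : Type} [Field k] {q : k} {m n : ℕ}

local notation "𝕏" => X k q m n

/-- Over an infinite field, one can separate finitely many exponents by powers of one scalar. -/
lemma exists_separating_unit [Infinite k] (D : Finset ℕ) :
    ∃ t : kˣ, ∀ d ∈ D, ∀ d' ∈ D, d ≠ d' → (t : k) ^ d ≠ (t : k) ^ d' := by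
  classical
  have hfin : ∀ d d' : ℕ, d ≠ d' → Set.Finite {x : k | x ^ d = x ^ d'} := by
    intro d d' hne
    have hp : (Polynomial.X ^ d - Polynomial.X ^ d' : Polynomial k) ≠ 0 := by
      intro h
      have := congrArg (fun p => Polynomial.coeff p d) h
      simp only [Polynomial.coeff_sub, Polynomial.coeff_X_pow, if_pos rfl,
        Polynomial.coeff_zero] at this
      rw [if_neg hne] at this
      simp at this
    have := Polynomial.finite_setOf_isRoot hp
    refine this.subset ?_
    intro x hx
    simp only [Set.mem_setOf_eq] at hx ⊢
    simp [Polynomial.IsRoot, hx]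
  have hbig : Set.Finite ({(0 : k)} ∪
      ⋃ p ∈ (D ×ˢ D : Finset (ℕ × ℕ)).filter (fun p => p.1 ≠ p.2),
        {x : k | x ^ p.1 = x ^ p.2}) := by
    apply Set.Finite.union (Set.finite_singleton _)
    apply Set.Finite.biUnion (Finset.finite_toSet _)
    intro p hp
    simp only [Finset.coe_filter, Set.mem_setOf_eq] at hp
    exact hfin p.1 p.2 hp.2
  obtain ⟨t, ht⟩ := hbig.infinite_compl.nonempty
  simp only [Set.mem_compl_iff, Set.mem_union, Set.mem_singleton_iff, Set.mem_iUnion,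
    not_or, not_exists, Set.mem_setOf_eq] at ht
  refine ⟨Units.mk0 t ht.1, ?_⟩
  intro d hd d' hd' hne h
  exact ht.2 (d, d') (by simp [Finset.mem_filter, hd, hd', hne]) h

/-- Coordinate selection for the torus. -/
def selA (c : Fin m ⊕ Fin n) (t : kˣ) : Fin m → kˣ :=
  fun i => if c = Sum.inl i then t else 1

def selB (c : Fin m ⊕ Fin n) (t : kˣ) : Fin n → kˣ :=
  fun j => if c = Sum.inr j then t else 1

def cnt (c : Fin m ⊕ Fin n) (w : Multiset (Fin m) × Multiset (Fin n)) : ℕ :=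
  Sum.elim (fun i => w.1.count i) (fun j => w.2.count j) c

lemma prod_map_ite {γ : Type} [DecidableEq γ] (s : Multiset γ) (a : γ) (t : k) :
    (s.map fun x => if a = x then t else 1).prod = t ^ s.count a := by
  induction s using Multiset.induction with
  | empty => simp
  | cons b s ih =>
    rw [Multiset.map_cons, Multiset.prod_cons, ih, Multiset.count_cons]
    by_cases h : a = b
    · subst h
      simp [pow_succ, mul_comm]
    · have : b ≠ a := Ne.symm h
      simp [h, this]

lemma chr_sel (c : Fin m ⊕ Fin n) (t : kˣ) (w : Multiset (Fin m) × Multiset (Fin n)) :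
    chr (selA c t) (selB c t) w = (t : k) ^ cnt c w := by
  classical
  cases c with
  | inl i =>
    have h2 : ((w.2.map fun j => ((selB (Sum.inl i : Fin m ⊕ Fin n) t) j : k)).prod) = 1 := by
      rw [show (fun j => ((selB (Sum.inl i : Fin m ⊕ Fin n) t) j : k)) = fun _ => (1 : k) by
        funext j; simp [selB]]
      simp
    rw [chr, h2, mul_one, cnt]
    have : (fun i' => ((selA (Sum.inl i : Fin m ⊕ Fin n) t) i' : k))
        = fun i' => if i = i' then (t : k) else 1 := by
      funext i'
      simp only [selA, Sum.inl.injEq]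
      split <;> simp_all
    rw [this, prod_map_ite]
    rfl
  | inr j =>
    have h2 : ((w.1.map fun i => ((selA (Sum.inr j : Fin m ⊕ Fin n) t) i : k)).prod) = 1 := by
      rw [show (fun i => ((selA (Sum.inr j : Fin m ⊕ Fin n) t) i : k)) = fun _ => (1 : k) by
        funext i; simp [selA]]
      simp
    rw [chr, h2, one_mul, cnt]
    have : (fun j' => ((selB (Sum.inr j : Fin m ⊕ Fin n) t) j' : k))
        = fun j' => if j = j' then (t : k) else 1 := by
      funext j'
      simp only [selB, Sum.inr.injEq]
      split <;> simp_all
    rw [this, prod_map_ite]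
    rfl

/-- Key separation lemma: the weight-pure components of any element of an `H`-invariant
ideal again lie in the ideal. -/
lemma separation [Infinite k] {P : TwoSidedIdeal (QMat k q m n)}
    (hP : IsHInvariant k q m n P) :
    ∀ (T : Finset (Multiset (Fin m) × Multiset (Fin n)))
      (v : Multiset (Fin m) × Multiset (Fin n) → QMat k q m n),
      (∀ w, v w ∈ pureSpan k q m n w) → (∑ w ∈ T, v w) ∈ P → ∀ w ∈ T, v w ∈ P := by
  classical
  intro T
  induction T using Finset.strongInduction with
  | _ T ih =>
    intro v hv hsum w₂ hw₂
    by_cases hT : ∃ w₀ ∈ T, ∃ w₁ ∈ T, w₀ ≠ w₁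
    · obtain ⟨w₀, hw₀, w₁, hw₁, hne⟩ := hT
      have hc : ∃ c : Fin m ⊕ Fin n, cnt c w₀ ≠ cnt c w₁ := by
        by_contra h
        push_neg at h
        apply hne
        refine Prod.ext (Multiset.ext.2 fun i => ?_) (Multiset.ext.2 fun j => ?_)
        · exact h (Sum.inl i)
        · exact h (Sum.inr j)
      obtain ⟨c, hcne⟩ := hc
      set D := T.image (cnt c) with hD
      obtain ⟨t, ht⟩ := exists_separating_unit (k := k) D
      set d₁ := cnt c w₀ with hd₁
      set φ := torusAut (q := q) (selA c t) (selB c t) with hφdef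
      have hφX : ∀ i j, φ (𝕏 i j) = ((selA c t i : k) * (selB c t j : k)) • 𝕏 i j :=
        fun i j => torusAut_X _ _ i j
      have hφu : φ (∑ w ∈ T, v w) ∈ P := hP (selA c t) (selB c t) φ hφX _ hsum
      have hφsum : φ (∑ w ∈ T, v w) = ∑ w ∈ T, ((t : k) ^ cnt c w) • v w := by
        rw [map_sum]
        refine Finset.sum_congr rfl fun w _ => ?_
        rw [phi_pure (selA c t) (selB c t) φ hφX (hv w), chr_sel]
      have hu' : (∑ w ∈ T, (((t : k) ^ cnt c w - (t : k) ^ d₁) • v w)) ∈ P := by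
        have h1 : (∑ w ∈ T, (((t : k) ^ cnt c w - (t : k) ^ d₁) • v w))
            = φ (∑ w ∈ T, v w) - (t : k) ^ d₁ • (∑ w ∈ T, v w) := by
          rw [hφsum, Finset.smul_sum, ← Finset.sum_sub_distrib]
          refine Finset.sum_congr rfl fun w _ => ?_
          module
        rw [h1]
        exact sub_mem hφu (tsi_smul_mem _ _ hsum)
      set T' := T.filter (fun w => cnt c w ≠ d₁) with hT'
      have hsum' : (∑ w ∈ T', (((t : k) ^ cnt c w - (t : k) ^ d₁) • v w)) ∈ P := by
        have : (∑ w ∈ T', (((t : k) ^ cnt c w - (t : k) ^ d₁) • v w))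
            = ∑ w ∈ T, (((t : k) ^ cnt c w - (t : k) ^ d₁) • v w) := by
          apply Finset.sum_filter_of_ne
          intro x _ hx
          intro hcnt
          apply hx
          rw [hcnt, sub_self, zero_smul]
        rw [this]
        exact hu'
      have hT'ss : T' ⊂ T := by
        refine Finset.filter_ssubset.2 ⟨w₀, hw₀, ?_⟩
        simp [hd₁]
      have hvP' : ∀ w ∈ T', v w ∈ P := by
        intro w hw
        have := ih T' hT'ss (fun w => ((t : k) ^ cnt c w - (t : k) ^ d₁) • v w)
          (fun w => pure_smul _ (hv w)) hsum' w hw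
        have hwT : w ∈ T := (Finset.filter_subset _ _) hw
        have hwne : cnt c w ≠ d₁ := (Finset.mem_filter.1 hw).2
        have hne0 : (t : k) ^ cnt c w - (t : k) ^ d₁ ≠ 0 := by
          rw [sub_ne_zero]
          exact ht _ (Finset.mem_image_of_mem _ hwT) _ (Finset.mem_image_of_mem _ hw₀) hwne
        have : ((t : k) ^ cnt c w - (t : k) ^ d₁)⁻¹ •
            (((t : k) ^ cnt c w - (t : k) ^ d₁) • v w) ∈ P := tsi_smul_mem _ _ this
        rwa [smul_smul, inv_mul_cancel₀ hne0, one_smul] at this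
      set T'' := T.filter (fun w => cnt c w = d₁) with hT''
      have hsum'' : (∑ w ∈ T'', v w) ∈ P := by
        have hsplit : (∑ w ∈ T'', v w) = (∑ w ∈ T, v w) - ∑ w ∈ T', v w := by
          rw [eq_sub_iff_add_eq]
          rw [hT'', hT']
          exact Finset.sum_filter_add_sum_filter_not T _ v
        rw [hsplit]
        refine sub_mem hsum ?_
        exact sum_mem fun w hw => hvP' w hw
      have hT''ss : T'' ⊂ T := by
        refine Finset.filter_ssubset.2 ⟨w₁, hw₁, ?_⟩
        exact fun h => hcne h.symm
      have hvP'' : ∀ w ∈ T'', v w ∈ P :=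
        ih T'' hT''ss v hv hsum''
      by_cases hcase : cnt c w₂ = d₁
      · exact hvP'' w₂ (Finset.mem_filter.2 ⟨hw₂, hcase⟩)
      · exact hvP' w₂ (Finset.mem_filter.2 ⟨hw₂, hcase⟩)
    · push_neg at hT
      have : T = {w₂} := by
        apply Finset.eq_singleton_iff_unique_mem.2
        exact ⟨hw₂, fun x hx => (hT x hx w₂ hw₂ : x = w₂)⟩
      rw [this, Finset.sum_singleton] at hsum
      exact hsum

end Separation
section Rep

variable {k : Type} [Field k] {q : k} {m n : ℕ}

local notation "𝕏" => X k q m n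

/-- The underlying vector space of the standard representation: finitely supported functions
on the weight monoid. -/
abbrev RepV (k : Type) [Field k] (m n : ℕ) : Type :=
  (Multiset (Fin m) × Multiset (Fin n)) →₀ k

/-- Exponent in the representation. -/
def expE (p : Fin m × Fin n) (w : Multiset (Fin m) × Multiset (Fin n)) : ℕ :=
  Multiset.card (w.1.filter fun x => p.1 < x) + Multiset.card (w.2.filter fun x => p.2 < x)

/-- The elementary weight of a pair. -/
def ew (p : Fin m × Fin n) : Multiset (Fin m) × Multiset (Fin n) := ({p.1}, {p.2})

lemma wt_cons_ew (p : Fin m × Fin n) (L : List (Fin m × Fin n)) :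
    wt (p :: L) = ew p + wt L := by
  simp [wt_cons, ew, Prod.ext_iff, Multiset.singleton_add]

lemma expE_add (p p' : Fin m × Fin n) (w : Multiset (Fin m) × Multiset (Fin n)) :
    expE p (w + ew p') = expE p w
      + ((if p.1 < p'.1 then 1 else 0) + (if p.2 < p'.2 then 1 else 0)) := by
  simp only [expE, ew, Prod.fst_add, Prod.snd_add, Multiset.filter_add, Multiset.card_add,
    Multiset.filter_singleton]
  split <;> split <;> simp <;> omega

/-- The action of a generator on the representation space. -/
def genOp (q : k) (p : Fin m × Fin n) : RepV k m n →ₗ[k] RepV k m n :=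
  Finsupp.lsum k fun w => (q ^ expE p w) • Finsupp.lsingle (w + ew p)

lemma genOp_single (p : Fin m × Fin n) (w : Multiset (Fin m) × Multiset (Fin n)) (c : k) :
    genOp q p (Finsupp.single w c) = (q ^ expE p w) • Finsupp.single (w + ew p) c := by
  rw [genOp, Finsupp.lsum_single]
  rfl

/-- The standard representation of `QMat` on `RepV`. -/
def rep (k : Type) [Field k] (q : k) (hq : q ≠ 0) (m n : ℕ) :
    QMat k q m n →ₐ[k] Module.End k (RepV k m n) :=
  RingQuot.liftAlgHom k ⟨FreeAlgebra.lift k (genOp q), by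
    intro x y hxy
    induction hxy with
    | @col i l j h =>
      simp only [map_mul, map_smul, FreeAlgebra.lift_ι_apply]
      apply Finsupp.lhom_ext
      intro w c
      simp only [LinearMap.smul_apply, Module.End.mul_apply, genOp_single, map_smul]
      simp only [smul_smul]
      rw [expE_add, expE_add]
      have h1 : ¬ (l < i) := not_lt_of_gt h
      have h2 : ¬ ((j : Fin n) < j) := lt_irrefl _
      rw [if_pos h, if_neg h1, if_neg h2]
      rw [show w + ew (l, j) + ew (i, j) = w + ew (i, j) + ew (l, j) by
        rw [add_assoc, add_assoc, add_comm (ew (l, j))]]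
      congr 1
      ring
    | @row i j s h =>
      simp only [map_mul, map_smul, FreeAlgebra.lift_ι_apply]
      apply Finsupp.lhom_ext
      intro w c
      simp only [LinearMap.smul_apply, Module.End.mul_apply, genOp_single, map_smul]
      simp only [smul_smul]
      rw [expE_add, expE_add]
      have h1 : ¬ (s < j) := not_lt_of_gt h
      have h2 : ¬ ((i : Fin m) < i) := lt_irrefl _
      rw [if_pos h, if_neg h1, if_neg h2]
      rw [show w + ew (i, s) + ew (i, j) = w + ew (i, j) + ew (i, s) by
        rw [add_assoc, add_assoc, add_comm (ew (i, s))]]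
      congr 1
      ring
    | @comm i l j s h1 h2 =>
      simp only [map_mul, FreeAlgebra.lift_ι_apply]
      apply Finsupp.lhom_ext
      intro w c
      simp only [Module.End.mul_apply, genOp_single, map_smul]
      simp only [smul_smul]
      rw [expE_add, expE_add]
      have ha : ¬ (l < i) := not_lt_of_gt h1
      have hb : ¬ (s < j) := not_lt_of_gt h2
      rw [if_pos h1, if_neg ha, if_pos h2, if_neg hb]
      rw [show w + ew (l, j) + ew (i, s) = w + ew (i, s) + ew (l, j) by
        rw [add_assoc, add_assoc, add_comm (ew (l, j))]]
      congr 1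
      ring
    | @mixed i l j s h1 h2 =>
      simp only [map_mul, map_smul, map_sub, FreeAlgebra.lift_ι_apply]
      apply Finsupp.lhom_ext
      intro w c
      simp only [LinearMap.sub_apply, LinearMap.smul_apply, Module.End.mul_apply,
        genOp_single, map_smul]
      simp only [smul_smul]
      rw [expE_add, expE_add, expE_add]
      have ha : ¬ (l < i) := not_lt_of_gt h1
      have hb : ¬ (s < j) := not_lt_of_gt h2
      rw [if_pos h1, if_neg ha, if_pos h2, if_neg hb]
      rw [show w + ew (l, s) + ew (i, j) = w + ew (i, j) + ew (l, s) by
        rw [add_assoc, add_assoc, add_comm (ew (l, s))]]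
      rw [show w + ew (l, j) + ew (i, s) = w + ew (i, j) + ew (l, s) by
        rw [add_assoc, add_assoc]
        congr 1
        simp [ew, Prod.ext_iff, add_comm]]
      rw [← sub_smul]
      have hexp : expE (i, j) w + expE (l, s) w = expE (i, s) w + expE (l, j) w := by
        simp only [expE]
        omega
      congr 1
      have key : ∀ a b c d : ℕ, a + b = c + d →
          q ^ b * q ^ (a + (1 + 1)) - q ^ a * q ^ (b + (0 + 0))
            = (q - q⁻¹) * (q ^ d * q ^ (c + (1 + 0))) := by
        intro a b c d habcd
        rw [← pow_add, ← pow_add, ← pow_add]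
        rw [show b + (a + (1 + 1)) = (a + b) + 2 by omega,
          show a + (b + (0 + 0)) = a + b by omega,
          show d + (c + (1 + 0)) = (c + d) + 1 by omega, ← habcd]
        field_simp
        ring
      exact key _ _ _ _ hexp⟩

end Rep
section Hard

variable {k : Type} [Field k] {q : k} {m n : ℕ}

local notation "𝕏" => X k q m n

lemma rep_X (hq : q ≠ 0) (i : Fin m) (j : Fin n) :
    rep k q hq m n (𝕏 i j) = genOp q (i, j) := by
  rw [rep, X, RingQuot.liftAlgHom_mkAlgHom_apply, FreeAlgebra.lift_ι_apply]

lemma rep_minor_zero (hq : q ≠ 0) {i l : Fin m} {j s : Fin n} (h1 : i < l) (h2 : j < s) :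
    rep k q hq m n (𝕏 i j * 𝕏 l s - q • (𝕏 i s * 𝕏 l j)) = 0 := by
  rw [map_sub, map_smul, map_mul, map_mul, rep_X, rep_X, rep_X, rep_X]
  apply Finsupp.lhom_ext
  intro w c
  simp only [LinearMap.sub_apply, LinearMap.smul_apply, Module.End.mul_apply, genOp_single,
    map_smul, LinearMap.zero_apply, Finsupp.coe_zero]
  simp only [smul_smul]
  rw [expE_add, expE_add]
  have ha : ¬ (l < i) := not_lt_of_gt h1
  have hb : ¬ (s < j) := not_lt_of_gt h2
  simp only [if_pos h1, if_pos h2, if_neg ha, if_neg hb]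
  rw [show w + ew (l, j) + ew (i, s) = w + ew (l, s) + ew (i, j) by
    rw [add_assoc, add_assoc]
    congr 1
    simp [ew, Prod.ext_iff, add_comm]]
  rw [← sub_smul]
  have hexp : expE (i, j) w + expE (l, s) w = expE (i, s) w + expE (l, j) w := by
    simp only [expE]
    omega
  have : q ^ expE (l, s) w * q ^ (expE (i, j) w + (1 + 1))
      - q * (q ^ expE (l, j) w * q ^ (expE (i, s) w + (1 + 0))) = 0 := by
    rw [← pow_add, ← pow_add]
    rw [show expE (l, s) w + (expE (i, j) w + (1 + 1)) = (expE (i, j) w + expE (l, s) w) + 2 by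
      omega]
    rw [hexp]
    rw [show expE (l, j) w + (expE (i, s) w + (1 + 0)) = (expE (i, s) w + expE (l, j) w) + 1 by
      omega]
    rw [pow_succ, pow_succ]
    ring
  rw [this, zero_smul]

lemma rep_matMono_single (hq : q ≠ 0) (L : List (Fin m × Fin n))
    (w : Multiset (Fin m) × Multiset (Fin n)) (c : k) :
    ∃ t : ℕ, rep k q hq m n (matMono k q m n L) (Finsupp.single w c)
      = q ^ t • Finsupp.single (w + wt L) c := by
  induction L generalizing w with
  | nil =>
    refine ⟨0, ?_⟩
    rw [matMono_nil, map_one]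
    simp [wt_nil]
  | cons p L ih =>
    obtain ⟨a, b⟩ := p
    obtain ⟨t, ht⟩ := ih w
    refine ⟨t + expE (a, b) (w + wt L), ?_⟩
    rw [matMono_cons, map_mul, Module.End.mul_apply, ht, map_smul, rep_X, genOp_single,
      smul_smul, ← pow_add]
    rw [show w + wt ((a, b) :: L) = w + wt L + ew (a, b) by
      rw [wt_cons_ew, ← add_assoc, add_right_comm]]

/-- Bad weights relative to a pair of index sets. -/
def bad (I : Finset (Fin m)) (J : Finset (Fin n))
    (w : Multiset (Fin m) × Multiset (Fin n)) : Prop :=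
  (∃ i ∈ w.1, i ∈ I) ∨ (∃ j ∈ w.2, j ∈ J)

lemma bad_add_left {I : Finset (Fin m)} {J : Finset (Fin n)}
    {w w' : Multiset (Fin m) × Multiset (Fin n)} (h : bad I J w) : bad I J (w + w') := by
  rcases h with ⟨i, hi, hI⟩ | ⟨j, hj, hJ⟩
  · exact Or.inl ⟨i, Multiset.mem_add.2 (Or.inl hi), hI⟩
  · exact Or.inr ⟨j, Multiset.mem_add.2 (Or.inl hj), hJ⟩

lemma bad_add_right {I : Finset (Fin m)} {J : Finset (Fin n)}
    {w w' : Multiset (Fin m) × Multiset (Fin n)} (h : bad I J w') : bad I J (w + w') := by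
  rcases h with ⟨i, hi, hI⟩ | ⟨j, hj, hJ⟩
  · exact Or.inl ⟨i, Multiset.mem_add.2 (Or.inr hi), hI⟩
  · exact Or.inr ⟨j, Multiset.mem_add.2 (Or.inr hj), hJ⟩

/-- The span of all bad basis vectors. -/
def Wbad (k : Type) [Field k] (m n : ℕ) (I : Finset (Fin m)) (J : Finset (Fin n)) :
    Submodule k (RepV k m n) :=
  Submodule.span k {v | ∃ w c, bad I J w ∧ v = Finsupp.single w c}

lemma genOp_Wbad {I : Finset (Fin m)} {J : Finset (Fin n)} (p : Fin m × Fin n)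
    {v : RepV k m n} (hv : v ∈ Wbad k m n I J) : genOp q p v ∈ Wbad k m n I J := by
  induction hv using Submodule.span_induction with
  | mem x hx =>
    obtain ⟨w, c, hw, rfl⟩ := hx
    rw [genOp_single]
    exact Submodule.smul_mem _ _
      (Submodule.subset_span ⟨w + ew p, c, bad_add_left hw, rfl⟩)
  | zero => rw [map_zero]; exact zero_mem _
  | add x y _ _ hx hy => rw [map_add]; exact add_mem hx hy
  | smul a x _ hx => rw [map_smul]; exact Submodule.smul_mem _ _ hx

lemma rep_Wbad (hq : q ≠ 0) {I : Finset (Fin m)} {J : Finset (Fin n)} (u : QMat k q m n)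
    {v : RepV k m n} (hv : v ∈ Wbad k m n I J) :
    rep k q hq m n u v ∈ Wbad k m n I J := by
  have hu : u ∈ Submodule.span k (Set.range (matMono k q m n)) := by
    rw [monomials_span_top]; trivial
  induction hu using Submodule.span_induction with
  | mem x hx =>
    obtain ⟨L, rfl⟩ := hx
    induction L with
    | nil =>
      rw [matMono_nil, map_one]
      exact hv
    | cons p L ihL =>
      rw [matMono_cons, map_mul, Module.End.mul_apply, rep_X]
      exact genOp_Wbad p ihL
  | zero => rw [map_zero]; exact zero_mem _
  | add x y _ _ hx hy => rw [map_add, LinearMap.add_apply]; exact add_mem hx hy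
  | smul a x _ hx => rw [map_smul, LinearMap.smul_apply]; exact Submodule.smul_mem _ _ hx

/-- Elements whose representation sends good basis vectors into the bad span. -/
def goodKiller (hq : q ≠ 0) (I : Finset (Fin m)) (J : Finset (Fin n)) : Set (QMat k q m n) :=
  {u | ∀ w c, ¬ bad I J w → rep k q hq m n u (Finsupp.single w c) ∈ Wbad k m n I J}

lemma goodKiller_all (hq : q ≠ 0) {I : Finset (Fin m)} {J : Finset (Fin n)}
    {u : QMat k q m n} (hu : u ∈ goodKiller hq I J) (v : RepV k m n) :
    rep k q hq m n u v ∈ Wbad k m n I J := by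
  induction v using Finsupp.induction with
  | zero => rw [map_zero]; exact zero_mem _
  | single_add w c f _ _ ih =>
    rw [map_add]
    refine add_mem ?_ ih
    by_cases hw : bad I J w
    · exact rep_Wbad hq u (Submodule.subset_span ⟨w, c, hw, rfl⟩)
    · exact hu w c hw

/-- The bad-weight ideal. -/
def badIdeal (hq : q ≠ 0) (I : Finset (Fin m)) (J : Finset (Fin n)) :
    TwoSidedIdeal (QMat k q m n) :=
  TwoSidedIdeal.mk' (goodKiller hq I J)
    (by intro w c _; rw [map_zero]; exact zero_mem _)
    (by
      intro x y hx hy w c hw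
      rw [map_add, LinearMap.add_apply]
      exact add_mem (hx w c hw) (hy w c hw))
    (by
      intro x hx w c hw
      rw [map_neg, LinearMap.neg_apply]
      exact neg_mem (hx w c hw))
    (by
      intro x y hy w c hw
      rw [map_mul, Module.End.mul_apply]
      exact rep_Wbad hq x (hy w c hw))
    (by
      intro x y hx w c _
      rw [map_mul, Module.End.mul_apply]
      exact goodKiller_all hq hx _)

lemma mem_badIdeal (hq : q ≠ 0) {I : Finset (Fin m)} {J : Finset (Fin n)}
    {u : QMat k q m n} : u ∈ badIdeal hq I J ↔ u ∈ goodKiller hq I J :=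
  TwoSidedIdeal.mem_mk' _ _ _ _ _ _ _

lemma PIJ_le_badIdeal (hq : q ≠ 0) (I : Finset (Fin m)) (J : Finset (Fin n)) :
    PIJ k q m n I J ≤ badIdeal hq I J := by
  refine sup_le (sup_le ?_ ?_) ?_
  · apply tsi_span_le
    rintro x ⟨i, l, j, s, h1, h2, rfl⟩
    refine SetLike.mem_coe.2 ((mem_badIdeal hq).2 fun w c _ => ?_)
    rw [rep_minor_zero hq h1 h2]
    simpa using zero_mem (Wbad k m n I J)
  · apply tsi_span_le
    rintro x ⟨i, j, hi, rfl⟩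
    refine SetLike.mem_coe.2 ((mem_badIdeal hq).2 fun w c _ => ?_)
    rw [rep_X, genOp_single]
    refine Submodule.smul_mem _ _ (Submodule.subset_span ⟨w + ew (i, j), c, ?_, rfl⟩)
    exact Or.inl ⟨i, Multiset.mem_add.2 (Or.inr (Multiset.mem_singleton_self i)), hi⟩
  · apply tsi_span_le
    rintro x ⟨i, j, hj, rfl⟩
    refine SetLike.mem_coe.2 ((mem_badIdeal hq).2 fun w c _ => ?_)
    rw [rep_X, genOp_single]
    refine Submodule.smul_mem _ _ (Submodule.subset_span ⟨w + ew (i, j), c, ?_, rfl⟩)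
    exact Or.inr ⟨j, Multiset.mem_add.2 (Or.inr (Multiset.mem_singleton_self j)), hj⟩

/-- If a monomial lies in `P(I,J)` then its weight is bad. -/
lemma bad_of_matMono_mem_PIJ (hq : q ≠ 0) {I : Finset (Fin m)} {J : Finset (Fin n)}
    {L : List (Fin m × Fin n)} (h : matMono k q m n L ∈ PIJ k q m n I J) : bad I J (wt L) := by
  by_contra hbad
  have hC := (mem_badIdeal hq).1 (PIJ_le_badIdeal hq I J h)
  have h0 : ¬ bad I J (0 : Multiset (Fin m) × Multiset (Fin n)) := by
    rintro (⟨i, hi, -⟩ | ⟨j, hj, -⟩)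
    · simp at hi
    · simp at hj
  have hmem := hC 0 1 h0
  obtain ⟨t, ht⟩ := rep_matMono_single hq L 0 (1 : k)
  rw [ht, zero_add] at hmem
  -- evaluate at the coordinate `wt L`
  have heval : ∀ v ∈ Wbad k m n I J, (v : RepV k m n) (wt L) = 0 := by
    intro v hv
    induction hv using Submodule.span_induction with
    | mem x hx =>
      obtain ⟨w', c', hw', rfl⟩ := hx
      rw [Finsupp.single_apply]
      rw [if_neg]
      intro hcon
      exact hbad (hcon ▸ hw')
    | zero => rfl
    | add x y _ _ hx hy => rw [Finsupp.add_apply, hx, hy, add_zero]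
    | smul a x _ hx => rw [Finsupp.smul_apply, hx, smul_zero]
  have := heval _ hmem
  rw [Finsupp.smul_apply, Finsupp.single_apply, if_pos rfl, smul_eq_mul, mul_one] at this
  exact pow_ne_zero t hq this

end Hard
section Assembly

variable {k : Type} [Field k] {q : k} {m n : ℕ}

local notation "𝕏" => X k q m n

/-- Elements of a principal two-sided ideal are spanned by sandwiches. -/
lemma mem_span_singleton_sandwich {g x : QMat k q m n}
    (hx : x ∈ TwoSidedIdeal.span {g}) :
    x ∈ Submodule.span k {y : QMat k q m n | ∃ u v, y = u * g * v} := by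
  set S : Set (QMat k q m n) := {y | ∃ u v, y = u * g * v} with hS
  have hleft : ∀ (a : QMat k q m n) x, x ∈ Submodule.span k S →
      a * x ∈ Submodule.span k S := by
    intro a x hx
    induction hx using Submodule.span_induction with
    | mem y hy =>
      obtain ⟨u, v, rfl⟩ := hy
      exact Submodule.subset_span ⟨a * u, v, by simp [mul_assoc]⟩
    | zero => rw [mul_zero]; exact zero_mem _
    | add y z _ _ hy hz => rw [mul_add]; exact add_mem hy hz
    | smul c y _ hy => rw [mul_smul_comm]; exact Submodule.smul_mem _ _ hy
  have hright : ∀ (a : QMat k q m n) x, x ∈ Submodule.span k S →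
      x * a ∈ Submodule.span k S := by
    intro a x hx
    induction hx using Submodule.span_induction with
    | mem y hy =>
      obtain ⟨u, v, rfl⟩ := hy
      exact Submodule.subset_span ⟨u, v * a, by simp [mul_assoc]⟩
    | zero => rw [zero_mul]; exact zero_mem _
    | add y z _ _ hy hz => rw [add_mul]; exact add_mem hy hz
    | smul c y _ hy => rw [smul_mul_assoc]; exact Submodule.smul_mem _ _ hy
  have : x ∈ TwoSidedIdeal.mk' (Submodule.span k S : Set (QMat k q m n))
      (zero_mem _) (fun ha hb => add_mem ha hb) (fun ha => neg_mem ha)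
      (fun {a b} hb => hleft a b hb) (fun {a b} ha => hright b a ha) := by
    refine TwoSidedIdeal.mem_span_iff.1 hx _ ?_
    intro y hy
    rw [Set.mem_singleton_iff] at hy
    subst hy
    refine SetLike.mem_coe.2 ((TwoSidedIdeal.mem_mk' _ _ _ _ _ _ _).2 ?_)
    exact Submodule.subset_span ⟨1, 1, by rw [one_mul, mul_one]⟩
  exact (TwoSidedIdeal.mem_mk' _ _ _ _ _ _ _).1 this

/-- The middle-multiplication lemma. -/
lemma mid_mem (hq : q ≠ 0) {P : TwoSidedIdeal (QMat k q m n)} (hP1 : I₁ k q m n ≤ P)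
    (g g' : List (Fin m × Fin n))
    (hcore : ∀ M : List (Fin m × Fin n), matMono k q m n (g ++ M ++ g') ∈ P)
    (z : QMat k q m n) : matMono k q m n g * z * matMono k q m n g' ∈ P := by
  have hz : z ∈ Submodule.span k (Set.range (matMono k q m n)) := by
    rw [monomials_span_top]; trivial
  induction hz using Submodule.span_induction with
  | mem x hx =>
    obtain ⟨M, rfl⟩ := hx
    rw [← matMono_append, ← matMono_append]
    exact hcore M
  | zero => rw [mul_zero, zero_mul]; exact zero_mem _
  | add x y _ _ hx hy => rw [mul_add, add_mul]; exact add_mem hx hy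
  | smul c x _ hx =>
    rw [mul_smul_comm, smul_mul_assoc]
    exact tsi_smul_mem _ _ hx

lemma sandwich_mul_mem (hq : q ≠ 0) {P : TwoSidedIdeal (QMat k q m n)}
    (hP1 : I₁ k q m n ≤ P) (g g' : List (Fin m × Fin n))
    (hcore : ∀ M : List (Fin m × Fin n), matMono k q m n (g ++ M ++ g') ∈ P) :
    ∀ a ∈ TwoSidedIdeal.span {matMono k q m n g},
      ∀ b ∈ TwoSidedIdeal.span {matMono k q m n g'}, a * b ∈ P := by
  intro a ha b hb
  have ha' := mem_span_singleton_sandwich ha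
  have hb' := mem_span_singleton_sandwich hb
  clear ha hb
  induction ha' using Submodule.span_induction with
  | mem x hx =>
    obtain ⟨u, v, rfl⟩ := hx
    induction hb' using Submodule.span_induction with
    | mem y hy =>
      obtain ⟨u', v', rfl⟩ := hy
      have : u * matMono k q m n g * v * (u' * matMono k q m n g' * v')
          = u * (matMono k q m n g * (v * u') * matMono k q m n g') * v' := by
        simp only [mul_assoc]
      rw [this]
      exact P.mul_mem_right _ _ (P.mul_mem_left _ _ (mid_mem hq hP1 g g' hcore _))
    | zero => rw [mul_zero]; exact zero_mem _
    | add y z _ _ hy hz => rw [mul_add]; exact add_mem hy hz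
    | smul c y _ hy => rw [mul_smul_comm]; exact tsi_smul_mem _ _ hy
  | zero => rw [zero_mul]; exact zero_mem _
  | add x y _ _ hx hy => rw [add_mul]; exact add_mem hx hy
  | smul c x _ hx => rw [smul_mul_assoc]; exact tsi_smul_mem _ _ hx

/-- `H`-invariance of a span whose generators are permuted up to scalars. -/
lemma hinv_span (S : Set (QMat k q m n))
    (h : ∀ (α : Fin m → kˣ) (β : Fin n → kˣ) (φ : QMat k q m n ≃ₐ[k] QMat k q m n),
      (∀ i j, φ (𝕏 i j) = ((α i : k) * (β j : k)) • 𝕏 i j) →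
      ∀ s ∈ S, φ s ∈ TwoSidedIdeal.span S) :
    IsHInvariant k q m n (TwoSidedIdeal.span S) := by
  intro α β φ hφ a ha
  have hle : TwoSidedIdeal.span S ≤ TwoSidedIdeal.comap φ (TwoSidedIdeal.span S) :=
    tsi_span_le fun s hs => SetLike.mem_coe.2 ((TwoSidedIdeal.mem_comap φ).2 (h α β φ hφ s hs))
  exact (TwoSidedIdeal.mem_comap φ).1 (hle ha)

lemma hinv_sup {P Q : TwoSidedIdeal (QMat k q m n)} (hP : IsHInvariant k q m n P)
    (hQ : IsHInvariant k q m n Q) : IsHInvariant k q m n (P ⊔ Q) := by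
  intro α β φ hφ a ha
  obtain ⟨y, hy, z, hz, rfl⟩ := TwoSidedIdeal.mem_sup.1 ha
  rw [map_add]
  exact TwoSidedIdeal.mem_sup.2
    ⟨φ y, hP α β φ hφ y hy, φ z, hQ α β φ hφ z hz, rfl⟩

lemma hinv_I₁ : IsHInvariant k q m n (I₁ k q m n) := by
  apply hinv_span
  rintro α β φ hφ s ⟨i, l, j, st, h1, h2, rfl⟩
  rw [map_sub, map_smul, map_mul, map_mul, hφ, hφ, hφ, hφ, smul_mul_smul', smul_mul_smul']
  have : ((α i : k) * β j * ((α l : k) * β st)) • (𝕏 i j * 𝕏 l st)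
      - q • ((α i : k) * β st * ((α l : k) * β j)) • (𝕏 i st * 𝕏 l j)
      = ((α i : k) * β j * ((α l : k) * β st)) • (𝕏 i j * 𝕏 l st - q • (𝕏 i st * 𝕏 l j)) := by
    module
  rw [this]
  exact tsi_smul_mem _ _ (TwoSidedIdeal.subset_span ⟨i, l, j, st, h1, h2, rfl⟩)

lemma hinv_PIJ (I : Finset (Fin m)) (J : Finset (Fin n)) :
    IsHInvariant k q m n (PIJ k q m n I J) := by
  refine hinv_sup (hinv_sup hinv_I₁ ?_) ?_
  · apply hinv_span
    rintro α β φ hφ s ⟨i, j, hi, rfl⟩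
    rw [hφ]
    exact tsi_smul_mem _ _ (TwoSidedIdeal.subset_span ⟨i, j, hi, rfl⟩)
  · apply hinv_span
    rintro α β φ hφ s ⟨i, j, hj, rfl⟩
    rw [hφ]
    exact tsi_smul_mem _ _ (TwoSidedIdeal.subset_span ⟨i, j, hj, rfl⟩)

lemma I₁_le_PIJ (I : Finset (Fin m)) (J : Finset (Fin n)) :
    I₁ k q m n ≤ PIJ k q m n I J :=
  le_trans le_sup_left le_sup_left

/-- Easy direction: a monomial with bad weight lies in `P(I,J)`. -/
lemma matMono_mem_PIJ_of_bad {I : Finset (Fin m)} {J : Finset (Fin n)}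
    {L : List (Fin m × Fin n)} (h : bad I J (wt L)) :
    matMono k q m n L ∈ PIJ k q m n I J := by
  have hsplit : ∃ p ∈ L, (𝕏 p.1 p.2 ∈ PIJ k q m n I J) := by
    rcases h with ⟨i, hi, hI⟩ | ⟨j, hj, hJ⟩
    · rw [wt] at hi
      simp only [Multiset.mem_coe, List.mem_map] at hi
      obtain ⟨p, hp, rfl⟩ := hi
      exact ⟨p, hp, TwoSidedIdeal.mem_sup_left (TwoSidedIdeal.mem_sup_right
        (TwoSidedIdeal.subset_span ⟨p.1, p.2, hI, rfl⟩))⟩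
    · rw [wt] at hj
      simp only [Multiset.mem_coe, List.mem_map] at hj
      obtain ⟨p, hp, rfl⟩ := hj
      exact ⟨p, hp, TwoSidedIdeal.mem_sup_right
        (TwoSidedIdeal.subset_span ⟨p.1, p.2, hJ, rfl⟩)⟩
  obtain ⟨p, hp, hX⟩ := hsplit
  obtain ⟨L₁, L₂, rfl⟩ := List.append_of_mem hp
  rw [matMono_append, matMono_cons]
  exact (PIJ k q m n I J).mul_mem_left _ _ ((PIJ k q m n I J).mul_mem_right _ _ hX)

lemma not_bad_zero {I : Finset (Fin m)} {J : Finset (Fin n)} :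
    ¬ bad I J (0 : Multiset (Fin m) × Multiset (Fin n)) := by
  rintro (⟨i, hi, -⟩ | ⟨j, hj, -⟩)
  · simp at hi
  · simp at hj

lemma bad_add_iff {I : Finset (Fin m)} {J : Finset (Fin n)}
    {w w' : Multiset (Fin m) × Multiset (Fin n)} :
    bad I J (w + w') ↔ bad I J w ∨ bad I J w' := by
  constructor
  · rintro (⟨i, hi, hI⟩ | ⟨j, hj, hJ⟩)
    · rcases Multiset.mem_add.1 hi with h | h
      · exact Or.inl (Or.inl ⟨i, h, hI⟩)
      · exact Or.inr (Or.inl ⟨i, h, hI⟩)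
    · rcases Multiset.mem_add.1 hj with h | h
      · exact Or.inl (Or.inr ⟨j, h, hJ⟩)
      · exact Or.inr (Or.inr ⟨j, h, hJ⟩)
  · rintro (h | h)
    · exact bad_add_left h
    · exact bad_add_right h

/-- Representative extraction from a pure element. -/
lemma pure_repr (hq : q ≠ 0) {w : Multiset (Fin m) × Multiset (Fin n)}
    {L₀ : List (Fin m × Fin n)} (hL₀ : wt L₀ = w) {u : QMat k q m n}
    (hu : u ∈ pureSpan k q m n w) :
    ∃ c : k, u - c • matMono k q m n L₀ ∈ I₁ k q m n := by
  induction hu using Submodule.span_induction with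
  | mem x hx =>
    obtain ⟨L, hL, rfl⟩ := hx
    obtain ⟨c, hc, hmem⟩ := transfer hq (L := L) (L' := L₀) (by rw [hL, hL₀])
    exact ⟨c, hmem⟩
  | zero => exact ⟨0, by simp⟩
  | add x y _ _ hx hy =>
    obtain ⟨c, hc⟩ := hx
    obtain ⟨d, hd⟩ := hy
    refine ⟨c + d, ?_⟩
    have : x + y - (c + d) • matMono k q m n L₀
        = (x - c • matMono k q m n L₀) + (y - d • matMono k q m n L₀) := by
      module
    rw [this]
    exact add_mem hc hd
  | smul a x _ hx =>
    obtain ⟨c, hc⟩ := hx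
    refine ⟨a * c, ?_⟩
    have : a • x - (a * c) • matMono k q m n L₀ = a • (x - c • matMono k q m n L₀) := by
      module
    rw [this]
    exact tsi_smul_mem _ _ hc

end Assembly
section Main

variable {k : Type} [Field k] {q : k} {m n : ℕ}

local notation "𝕏" => X k q m n

lemma mono_mem_of_wt_eq (hq : q ≠ 0) {P : TwoSidedIdeal (QMat k q m n)}
    (hP1 : I₁ k q m n ≤ P) {L L' : List (Fin m × Fin n)} (hw : wt L = wt L')
    (h : matMono k q m n L ∈ P) : matMono k q m n L' ∈ P :=
  ((transfer hq hw).mem_iff hP1).1 h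

/-- A monomial in an `H`-prime ideal containing `I₁` has a generator factor in the ideal. -/
lemma mono_mem_imp [Infinite k] (hq : q ≠ 0) {P : TwoSidedIdeal (QMat k q m n)}
    (hP : IsHPrime k q m n P) (hP1 : I₁ k q m n ≤ P) :
    ∀ L : List (Fin m × Fin n), matMono k q m n L ∈ P → ∃ p ∈ L, 𝕏 p.1 p.2 ∈ P := by
  intro L
  induction L with
  | nil =>
    intro h
    rw [matMono_nil] at h
    exact absurd (tsi_eq_top_of_one_mem h) hP.2.1
  | cons p L ih =>
    intro h
    set Q := TwoSidedIdeal.span {matMono k q m n [p]} with hQdef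
    set R := TwoSidedIdeal.span {matMono k q m n L} with hRdef
    have hQ : IsHInvariant k q m n Q := by
      apply hinv_span
      rintro α β φ hφ s hs
      rw [Set.mem_singleton_iff] at hs
      subst hs
      rw [phi_matMono α β φ hφ]
      exact tsi_smul_mem _ _ (TwoSidedIdeal.subset_span rfl)
    have hR : IsHInvariant k q m n R := by
      apply hinv_span
      rintro α β φ hφ s hs
      rw [Set.mem_singleton_iff] at hs
      subst hs
      rw [phi_matMono α β φ hφ]
      exact tsi_smul_mem _ _ (TwoSidedIdeal.subset_span rfl)
    have hcore : ∀ M : List (Fin m × Fin n), matMono k q m n ([p] ++ M ++ L) ∈ P := by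
      intro M
      have hbase : matMono k q m n ((p :: L) ++ M) ∈ P := by
        rw [matMono_append]
        exact P.mul_mem_right _ _ h
      refine mono_mem_of_wt_eq hq hP1 ?_ hbase
      rw [wt_append, show (p :: L) = [p] ++ L from rfl, wt_append, wt_append, wt_append]
      abel
    have hQR : ∀ a ∈ Q, ∀ b ∈ R, a * b ∈ P :=
      sandwich_mul_mem hq hP1 [p] L hcore
    rcases hP.2.2 Q R hQ hR hQR with hle | hle
    · refine ⟨p, List.mem_cons_self (a := p) (l := L), ?_⟩
      have := hle (TwoSidedIdeal.subset_span rfl)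
      rwa [matMono_singleton] at this
    · obtain ⟨p', hp', hX⟩ := ih (hle (TwoSidedIdeal.subset_span rfl))
      exact ⟨p', List.mem_cons_of_mem _ hp', hX⟩

/-- The Segre-type condition for `H`-prime ideals. -/
lemma segre [Infinite k] (hq : q ≠ 0) {P : TwoSidedIdeal (QMat k q m n)}
    (hP : IsHPrime k q m n P) (hP1 : I₁ k q m n ≤ P) {i : Fin m} {j : Fin n}
    (h : 𝕏 i j ∈ P) (i' : Fin m) (j' : Fin n) : 𝕏 i j' ∈ P ∨ 𝕏 i' j ∈ P := by
  classical
  set Q := TwoSidedIdeal.span {matMono k q m n [(i, j')]} with hQdef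
  set R := TwoSidedIdeal.span {matMono k q m n [(i', j)]} with hRdef
  have hQ : IsHInvariant k q m n Q := by
    apply hinv_span
    rintro α β φ hφ s hs
    rw [Set.mem_singleton_iff] at hs
    subst hs
    rw [phi_matMono α β φ hφ]
    exact tsi_smul_mem _ _ (TwoSidedIdeal.subset_span rfl)
  have hR : IsHInvariant k q m n R := by
    apply hinv_span
    rintro α β φ hφ s hs
    rw [Set.mem_singleton_iff] at hs
    subst hs
    rw [phi_matMono α β φ hφ]
    exact tsi_smul_mem _ _ (TwoSidedIdeal.subset_span rfl)
  have hcore : ∀ M : List (Fin m × Fin n), matMono k q m n ([(i, j')] ++ M ++ [(i', j)]) ∈ P := by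
    intro M
    set Lf := [(i, j')] ++ M ++ [(i', j)] with hLf
    set w := wt Lf with hwdef
    have hiw : i ∈ w.1 := by
      rw [hwdef, hLf, wt]
      simp
    have hjw : j ∈ w.2 := by
      rw [hwdef, hLf, wt]
      simp
    have hcard : Multiset.card (w.1.erase i) = Multiset.card (w.2.erase j) := by
      rw [Multiset.card_erase_of_mem hiw, Multiset.card_erase_of_mem hjw, wt_card]
    set L'' := (i, j) :: ((w.1.erase i).toList.zip ((w.2.erase j).toList)) with hL''
    have hlen : (w.1.erase i).toList.length = (w.2.erase j).toList.length := by
      rw [Multiset.length_toList, Multiset.length_toList, hcard]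
    have hw'' : wt L'' = w := by
      rw [hL'', wt_cons]
      refine Prod.ext ?_ ?_
      · show (i ::ₘ ↑(((w.1.erase i).toList.zip ((w.2.erase j).toList)).map Prod.fst)) = w.1
        rw [List.map_fst_zip (le_of_eq hlen), Multiset.coe_toList,
          Multiset.cons_erase hiw]
      · show (j ::ₘ ↑(((w.1.erase i).toList.zip ((w.2.erase j).toList)).map Prod.snd)) = w.2
        rw [List.map_snd_zip (ge_of_eq hlen), Multiset.coe_toList,
          Multiset.cons_erase hjw]
    have hL''mem : matMono k q m n L'' ∈ P := by
      rw [hL'', matMono_cons]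
      exact P.mul_mem_right _ _ h
    exact mono_mem_of_wt_eq hq hP1 (by rw [hw'']) hL''mem
  have hQR : ∀ a ∈ Q, ∀ b ∈ R, a * b ∈ P :=
    sandwich_mul_mem hq hP1 [(i, j')] [(i', j)] hcore
  rcases hP.2.2 Q R hQ hR hQR with hle | hle
  · left
    have := hle (TwoSidedIdeal.subset_span rfl)
    rwa [matMono_singleton] at this
  · right
    have := hle (TwoSidedIdeal.subset_span rfl)
    rwa [matMono_singleton] at this

end Main
section FinalPieces

variable {k : Type} [Field k] {q : k} {m n : ℕ}

local notation "𝕏" => X k q m n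

lemma pureSpan_eq_bot_of_not_achievable {w : Multiset (Fin m) × Multiset (Fin n)}
    (h : ¬ ∃ L : List (Fin m × Fin n), wt L = w) : pureSpan k q m n w = ⊥ := by
  rw [pureSpan, show {x | ∃ L, wt L = w ∧ x = matMono k q m n L} = (∅ : Set (QMat k q m n)) by
    ext x
    simp only [Set.mem_setOf_eq, Set.mem_empty_iff_false, iff_false, not_exists]
    intro L hL
    exact h ⟨L, hL.1⟩]
  exact Submodule.span_empty

/-- Extraction of a "leading monomial" datum from a pure element of an ideal containing `I₁`,
which itself is not in some ideal `P ⊇ I₁`. -/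
lemma pure_not_mem_repr (hq : q ≠ 0) {P : TwoSidedIdeal (QMat k q m n)}
    (hP1 : I₁ k q m n ≤ P) {w : Multiset (Fin m) × Multiset (Fin n)} {u : QMat k q m n}
    (hu : u ∈ pureSpan k q m n w) (hnP : u ∉ P) :
    ∃ (L₀ : List (Fin m × Fin n)) (c : k), wt L₀ = w ∧ c ≠ 0 ∧
      u - c • matMono k q m n L₀ ∈ I₁ k q m n ∧ matMono k q m n L₀ ∉ P := by
  by_cases hach : ∃ L : List (Fin m × Fin n), wt L = w
  · obtain ⟨L₀, hL₀⟩ := hach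
    obtain ⟨c, hc⟩ := pure_repr hq hL₀ hu
    by_cases hc0 : c = 0
    · exfalso
      rw [hc0, zero_smul, sub_zero] at hc
      exact hnP (hP1 hc)
    · refine ⟨L₀, c, hL₀, hc0, hc, fun hm => hnP ?_⟩
      have : u = (u - c • matMono k q m n L₀) + c • matMono k q m n L₀ := by abel
      rw [this]
      exact add_mem (hP1 hc) (tsi_smul_mem _ _ hm)
  · exfalso
    rw [pureSpan_eq_bot_of_not_achievable hach, Submodule.mem_bot] at hu
    exact hnP (hu ▸ zero_mem P)

/-- Forward direction main step. -/
lemma forward [Infinite k] (hq : q ≠ 0) {P : TwoSidedIdeal (QMat k q m n)}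
    (hP : IsHPrime k q m n P) (hP1 : I₁ k q m n ≤ P) :
    ∃ (I : Finset (Fin m)) (J : Finset (Fin n)), P = PIJ k q m n I J := by
  classical
  set I : Finset (Fin m) := Finset.univ.filter (fun i => ∀ j, 𝕏 i j ∈ P) with hI
  set J : Finset (Fin n) := Finset.univ.filter (fun j => ∀ i, 𝕏 i j ∈ P) with hJ
  have key : ∀ i j, 𝕏 i j ∈ P → i ∈ I ∨ j ∈ J := by
    intro i j h
    by_contra hcon
    push_neg at hcon
    obtain ⟨hiI, hjJ⟩ := hcon
    have hj' : ∃ j', 𝕏 i j' ∉ P := by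
      by_contra hall
      push_neg at hall
      exact hiI (Finset.mem_filter.2 ⟨Finset.mem_univ _, hall⟩)
    have hi' : ∃ i', 𝕏 i' j ∉ P := by
      by_contra hall
      push_neg at hall
      exact hjJ (Finset.mem_filter.2 ⟨Finset.mem_univ _, hall⟩)
    obtain ⟨j', hj'⟩ := hj'
    obtain ⟨i', hi'⟩ := hi'
    rcases segre hq hP hP1 h i' j' with hc | hc
    · exact hj' hc
    · exact hi' hc
  refine ⟨I, J, le_antisymm ?_ ?_⟩
  · -- P ≤ PIJ
    intro u hu
    obtain ⟨f, hfpure, hfsum⟩ := decomp u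
    have hcomp : ∀ w ∈ f.support, f w ∈ P := by
      refine separation hP.1 f.support f hfpure ?_
      show (∑ w ∈ f.support, f w) ∈ P
      rw [show (∑ w ∈ f.support, f w) = f.sum (fun _ x => x) from rfl, hfsum]
      exact hu
    have hcomp' : ∀ w ∈ f.support, f w ∈ PIJ k q m n I J := by
      intro w hw
      by_cases hnP : f w ∈ P
      swap
      · exact absurd (hcomp w hw) hnP
      by_cases hach : ∃ L : List (Fin m × Fin n), wt L = w
      · obtain ⟨L₀, hL₀⟩ := hach
        obtain ⟨c, hc⟩ := pure_repr hq hL₀ (hfpure w)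
        by_cases hc0 : c = 0
        · rw [hc0, zero_smul, sub_zero] at hc
          exact I₁_le_PIJ I J hc
        · have hcm : c • matMono k q m n L₀ ∈ P := by
            have : c • matMono k q m n L₀ = f w - (f w - c • matMono k q m n L₀) := by abel
            rw [this]
            exact sub_mem hnP (hP1 hc)
          have hm : matMono k q m n L₀ ∈ P := by
            have := tsi_smul_mem P c⁻¹ hcm
            rwa [smul_smul, inv_mul_cancel₀ hc0, one_smul] at this
          obtain ⟨p, hp, hXp⟩ := mono_mem_imp hq hP hP1 L₀ hm
          have hbad : bad I J (wt L₀) := by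
            rcases key p.1 p.2 hXp with hIm | hJm
            · exact Or.inl ⟨p.1,
                Multiset.mem_coe.2 (List.mem_map_of_mem (f := Prod.fst) hp), hIm⟩
            · exact Or.inr ⟨p.2,
                Multiset.mem_coe.2 (List.mem_map_of_mem (f := Prod.snd) hp), hJm⟩
          have hmPIJ := matMono_mem_PIJ_of_bad (k := k) (q := q) hbad
          have : f w = (f w - c • matMono k q m n L₀) + c • matMono k q m n L₀ := by abel
          rw [this]
          exact add_mem (I₁_le_PIJ I J hc) (tsi_smul_mem _ _ hmPIJ)
      · have := hfpure w
        rw [pureSpan_eq_bot_of_not_achievable hach, Submodule.mem_bot] at this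
        rw [this]
        exact zero_mem _
    rw [show u = f.sum (fun _ x => x) from hfsum.symm]
    exact sum_mem fun w hw => hcomp' w hw
  · -- PIJ ≤ P
    refine sup_le (sup_le hP1 (tsi_span_le ?_)) (tsi_span_le ?_)
    · rintro x ⟨i, j, hi, rfl⟩
      exact (Finset.mem_filter.1 hi).2 j
    · rintro x ⟨i, j, hj, rfl⟩
      exact (Finset.mem_filter.1 hj).2 i

/-- Backward direction main step. -/
lemma backward [Infinite k] (hq : q ≠ 0) (I : Finset (Fin m)) (J : Finset (Fin n)) :
    IsHPrime k q m n (PIJ k q m n I J) ∧ I₁ k q m n ≤ PIJ k q m n I J := by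
  classical
  refine ⟨⟨hinv_PIJ I J, ?_, ?_⟩, I₁_le_PIJ I J⟩
  · -- properness
    intro hTop
    have h1 : matMono k q m n [] ∈ PIJ k q m n I J := by
      rw [matMono_nil, hTop]
      trivial
    exact not_bad_zero (bad_of_matMono_mem_PIJ hq h1)
  · intro Q R hQ hR hQR
    by_contra hcon
    push_neg at hcon
    obtain ⟨hnQ, hnR⟩ := hcon
    rw [SetLike.le_def] at hnQ hnR
    push_neg at hnQ hnR
    obtain ⟨a, haQ, haP⟩ := hnQ
    obtain ⟨b, hbR, hbP⟩ := hnR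
    -- extract a pure component of `a` in `Q` but not in `P`
    obtain ⟨f, hfpure, hfsum⟩ := decomp a
    have hfQ : ∀ w ∈ f.support, f w ∈ Q := by
      refine separation hQ f.support f hfpure ?_
      show (∑ w ∈ f.support, f w) ∈ Q
      rw [show (∑ w ∈ f.support, f w) = f.sum (fun _ x => x) from rfl, hfsum]
      exact haQ
    have hw₀ : ∃ w₀ ∈ f.support, f w₀ ∉ PIJ k q m n I J := by
      by_contra hall
      push_neg at hall
      apply haP
      rw [show a = f.sum (fun _ x => x) from hfsum.symm]
      exact sum_mem fun w hw => hall w hw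
    obtain ⟨w₀, hw₀s, hw₀P⟩ := hw₀
    obtain ⟨L₀, c, hL₀, hc0, hcI, hmP⟩ :=
      pure_not_mem_repr hq (I₁_le_PIJ I J) (hfpure w₀) hw₀P
    -- same for `b`
    obtain ⟨g, hgpure, hgsum⟩ := decomp b
    have hgR : ∀ w ∈ g.support, g w ∈ R := by
      refine separation hR g.support g hgpure ?_
      show (∑ w ∈ g.support, g w) ∈ R
      rw [show (∑ w ∈ g.support, g w) = g.sum (fun _ x => x) from rfl, hgsum]
      exact hbR
    have hw₁ : ∃ w₁ ∈ g.support, g w₁ ∉ PIJ k q m n I J := by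
      by_contra hall
      push_neg at hall
      apply hbP
      rw [show b = g.sum (fun _ x => x) from hgsum.symm]
      exact sum_mem fun w hw => hall w hw
    obtain ⟨w₁, hw₁s, hw₁P⟩ := hw₁
    obtain ⟨L₁, d, hL₁, hd0, hdI, hmP'⟩ :=
      pure_not_mem_repr hq (I₁_le_PIJ I J) (hgpure w₁) hw₁P
    -- the product of the two leading monomials must be in `P(I,J)`
    have hprod : (c * d) • (matMono k q m n L₀ * matMono k q m n L₁) ∈ PIJ k q m n I J := by
      have e1 : f w₀ * g w₁ - (f w₀ - c • matMono k q m n L₀) * g w₁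
          - (c • matMono k q m n L₀) * (g w₁ - d • matMono k q m n L₁)
          = (c • matMono k q m n L₀) * (d • matMono k q m n L₁) := by
        rw [sub_mul, mul_sub]
        abel
      rw [← smul_mul_smul', ← e1]
      refine sub_mem (sub_mem (hQR _ (hfQ w₀ hw₀s) _ (hgR w₁ hw₁s)) ?_) ?_
      · exact (PIJ k q m n I J).mul_mem_right _ _ (I₁_le_PIJ I J hcI)
      · exact (PIJ k q m n I J).mul_mem_left _ _ (I₁_le_PIJ I J hdI)
    have hmm : matMono k q m n (L₀ ++ L₁) ∈ PIJ k q m n I J := by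
      have := tsi_smul_mem (PIJ k q m n I J) (c * d)⁻¹ hprod
      rw [smul_smul, inv_mul_cancel₀ (mul_ne_zero hc0 hd0), one_smul, ← matMono_append] at this
      exact this
    have hbadsum := bad_of_matMono_mem_PIJ hq hmm
    rw [wt_append] at hbadsum
    rcases bad_add_iff.1 hbadsum with hb | hb
    · exact hmP (matMono_mem_PIJ_of_bad hb)
    · exact hmP' (matMono_mem_PIJ_of_bad hb)

end FinalPieces
/-- Over an infinite field, the `H`-prime ideals of `O_q(M_{m,n}(k))`
containing `I₁` are precisely the ideals `P(I,J)`. -/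
theorem HPrime_containing_I1_iff (k : Type) [Field k] [Infinite k] (q : k) (hq : q ≠ 0)
    (m n : ℕ) (P : TwoSidedIdeal (QMat k q m n)) :
    (IsHPrime k q m n P ∧ I₁ k q m n ≤ P) ↔
      ∃ (I : Finset (Fin m)) (J : Finset (Fin n)), P = PIJ k q m n I J := by
  constructor
  · rintro ⟨hP, hP1⟩
    exact forward hq hP hP1
  · rintro ⟨I, J, rfl⟩
    exact ⟨(backward hq I J).1, (backward hq I J).2⟩
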